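/- If F_x and F_y are symmetric negative semi-definite N×N matrices and Δt > 0, then for every U^n ∈ ℝ^{N×N} the backward Euler equation (I - Δt F_x) U - U (Δt F_yᵀ) = U^n has a unique solution U ∈ ℝ^{N×N}. -/

import Mathlib

open Matrix

theorem stmt_10 {N : ℕ} (Fx Fy : Matrix (Fin N) (Fin N) ℝ)
    (hFxsymm : Fx.IsSymm) (hFysymm : Fy.IsSymm)
    (hFx : ∀ x : Fin N → ℝ, x ⬝ᵥ Fx.mulVec x ≤ 0)
    (hFy : ∀ x : Fin N → ℝ, x ⬝ᵥ Fy.mulVec x ≤ 0)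
    (Δt : ℝ) (hΔt : 0 < Δt) (Un : Matrix (Fin N) (Fin N) ℝ) :
    ∃! U : Matrix (Fin N) (Fin N) ℝ, (1 - Δt • Fx) * U - U * (Δt • Fyᵀ) = Un := by
  rw [Matrix.IsSymm] at hFysymm
  let f : Matrix (Fin N) (Fin N) ℝ →ₗ[ℝ] Matrix (Fin N) (Fin N) ℝ :=
    LinearMap.mulLeft ℝ ((1 : Matrix (Fin N) (Fin N) ℝ) - Δt • Fx) -
      LinearMap.mulRight ℝ (Δt • Fyᵀ)
  have hval : ∀ U, f U = (1 - Δt • Fx) * U - U * (Δt • Fyᵀ) := fun U => rfl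
  have hinj : Function.Injective f := by
    rw [← LinearMap.ker_eq_bot, LinearMap.ker_eq_bot']
    intro U hU
    rw [hval, sub_eq_zero, Matrix.sub_mul, Matrix.one_mul, sub_eq_iff_eq_add] at hU
    -- hU : U = U * (Δt • Fyᵀ) + (Δt • Fx) * U
    have h1 : (Uᵀ * (Fx * U)).trace ≤ 0 := by
      rw [Matrix.trace]
      apply Finset.sum_nonpos
      intro j _
      have := hFx (fun i => U i j)
      convert this using 1
      all_goals rfl
    have h2 : (Uᵀ * (U * Fyᵀ)).trace ≤ 0 := by
      rw [hFysymm, Matrix.trace_mul_comm, Matrix.trace]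
      apply Finset.sum_nonpos
      intro i _
      have := hFy (fun j => U i j)
      convert this using 1
      · rfl
      simp only [Matrix.diag, Matrix.mul_apply, Matrix.transpose_apply,
        Matrix.mulVec, dotProduct, Finset.sum_mul, Finset.mul_sum]
      rw [Finset.sum_comm]
      apply Finset.sum_congr rfl; intro k _
      apply Finset.sum_congr rfl; intro j _
      ring
    have htr : (Uᵀ * U).trace ≤ 0 := by
      nth_rewrite 2 [hU]
      rw [Matrix.mul_add, Matrix.trace_add]
      have e1 : Uᵀ * ((Δt • Fx) * U) = Δt • (Uᵀ * (Fx * U)) := by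
        rw [Matrix.smul_mul, Matrix.mul_smul]
      have e2 : Uᵀ * (U * (Δt • Fyᵀ)) = Δt • (Uᵀ * (U * Fyᵀ)) := by
        rw [Matrix.mul_smul, Matrix.mul_smul]
      rw [e1, e2, Matrix.trace_smul, Matrix.trace_smul]
      simp only [smul_eq_mul]
      have := mul_nonpos_of_nonneg_of_nonpos hΔt.le h1
      have := mul_nonpos_of_nonneg_of_nonpos hΔt.le h2
      linarith
    have hnn : ∀ j ∈ Finset.univ, (0:ℝ) ≤ (Uᵀ * U).diag j := by
      intro j _
      simp only [Matrix.diag, Matrix.mul_apply, Matrix.transpose_apply]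
      exact Finset.sum_nonneg fun i _ => mul_self_nonneg _
    have hzero : (Uᵀ * U).trace = 0 :=
      le_antisymm htr (Finset.sum_nonneg hnn)
    ext i j
    have hdiag : ∀ k ∈ Finset.univ, (Uᵀ * U).diag k = 0 := by
      rw [Matrix.trace] at hzero
      exact (Finset.sum_eq_zero_iff_of_nonneg hnn).mp hzero
    have := hdiag j (Finset.mem_univ j)
    simp only [Matrix.diag, Matrix.mul_apply, Matrix.transpose_apply] at this
    have h := (Finset.sum_eq_zero_iff_of_nonneg (fun i _ => mul_self_nonneg (U i j))).mp this i (Finset.mem_univ i)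
    simpa using mul_self_eq_zero.mp h
  have hsurj : Function.Surjective f := LinearMap.injective_iff_surjective.mp hinj
  obtain ⟨U, hU⟩ := hsurj Un
  exact ⟨U, hU, fun V hV => hinj ((hval V).trans (hV.trans hU.symm) : f V = f U)⟩
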